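/- Work in Z[X_1,…,X_n] and let 1 ≤ m ≤ n−1. For every integer j ≥ 0: (1) ∂_m( h_j(X_1,…,X_m) ) = − h_{j−1}(X_1,…,X_{m+1}); (2) ∂_m( e_j(X_{m+1},…,X_n) ) = e_{j−1}(X_{m+2},…,X_n). Here the conventions h_{−1} = 0 and e_{−1} = 0 are used, and for an empty set of variables e_0 = 1 and e_r = 0 for r > 0. -/
import Mathlib


open scoped BigOperators

namespace Dem

/-- The polynomial ring `ℤ[X_1, …, X_n]` (0-based variables). -/
abbrev R (n : ℕ) := MvPolynomial (Fin n) ℤ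

/-- `D` is the family of Demazure (BGG) operators `∂_i` (0-based), characterized
by `(X_{i+1} - X_i) · ∂_i P = P - s_i(P)`. -/
def IsDemFamily {n : ℕ} (D : ℕ → R n → R n) : Prop :=
  ∀ (i : ℕ) (h : i + 1 < n) (P : R n),
    (MvPolynomial.X (⟨i + 1, h⟩ : Fin n) - MvPolynomial.X ⟨i, by omega⟩) * D i P
      = P - MvPolynomial.rename (Equiv.swap (⟨i, by omega⟩ : Fin n) ⟨i + 1, h⟩) P

/-- `∂_w = ∂_{i_1} ∘ ⋯ ∘ ∂_{i_r}` for a word `l = [i_1, …, i_r]` (rightmost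
applied first). -/
def applyWord {n : ℕ} (D : ℕ → R n → R n) (l : List ℕ) (P : R n) : R n :=
  l.foldr (fun i Q => D i Q) P

/-- The permutation of `Fin n` given by a word in the simple transpositions. -/
def permOfWord (n : ℕ) (l : List ℕ) : Equiv.Perm (Fin n) :=
  (l.map fun i =>
    if h : i + 1 < n then Equiv.swap (⟨i, by omega⟩ : Fin n) ⟨i + 1, h⟩ else 1).prod

/-- `l` is a reduced word for the permutation `w`. -/
def IsReducedWordFor (n : ℕ) (l : List ℕ) (w : Equiv.Perm (Fin n)) : Prop :=
  (∀ i ∈ l, i + 1 < n) ∧ permOfWord n l = w ∧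
    ∀ l' : List ℕ, (∀ i ∈ l', i + 1 < n) → permOfWord n l' = w → l.length ≤ l'.length

/-- The standard reduced word for the longest element of `S_m` (0-based). -/
def longWord (m : ℕ) : List ℕ :=
  (List.range m).foldr (fun j acc => (List.range j).reverse ++ acc) []

/-- The set of variables `X_{lo+1}, …, X_n` (0-based indices `≥ lo`). -/
def varsFrom (n lo : ℕ) : Finset (Fin n) :=
  Finset.univ.filter fun a : Fin n => lo ≤ a.val

/-- The set of variables `X_1, …, X_m` (0-based indices `< m`). -/
def varsUpto (n m : ℕ) : Finset (Fin n) :=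
  Finset.univ.filter fun a : Fin n => a.val < m

/-- Elementary symmetric polynomial of degree `m` in the variables of `s`. -/
noncomputable def eOn {n : ℕ} (s : Finset (Fin n)) (m : ℕ) : R n :=
  ∑ T ∈ s.powersetCard m, ∏ a ∈ T, MvPolynomial.X a

/-- Complete homogeneous symmetric polynomial of degree `j` in the variables of
`s`. -/
noncomputable def hOn {n : ℕ} (s : Finset (Fin n)) (j : ℕ) : R n :=
  ∑ d ∈ s.sym j, (Multiset.map MvPolynomial.X (d : Multiset (Fin n))).prod

/-- `P` is symmetric in the variables with (0-based) index `≥ lo`. -/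
def SymFrom {n : ℕ} (lo : ℕ) (P : R n) : Prop :=
  ∀ a b : Fin n, lo ≤ a.val → lo ≤ b.val →
    MvPolynomial.rename (Equiv.swap a b) P = P

/-- The monomial symmetric polynomial in the first `c` of the `n` variables,
attached to the exponent vector `w` (the sum of the distinct monomials in the
`S_c`-orbit of `X_1^{w_1} ⋯ X_c^{w_c}`). -/
noncomputable def msymBlock {n : ℕ} (c : ℕ) (w : Fin c → ℕ) : R n :=
  ∑ g ∈ Finset.image
      (fun σ : Equiv.Perm (Fin c) =>
        fun i : Fin n => if h : i.val < c then w (σ ⟨i.val, h⟩) else 0)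
      Finset.univ,
    ∏ i, MvPolynomial.X i ^ g i

open MvPolynomial

variable {n : ℕ}

lemma eOn_zero (s : Finset (Fin n)) : eOn s 0 = 1 := by
  simp [eOn]

lemma hOn_zero (s : Finset (Fin n)) : hOn s 0 = 1 := by
  simp only [hOn, Finset.sym_zero, Finset.sum_singleton]
  rfl

lemma rename_eOn (σ : Equiv.Perm (Fin n)) (s : Finset (Fin n)) (k : ℕ) :
    rename σ (eOn s k) = eOn (s.image σ) k := by
  rw [eOn, map_sum, eOn]
  refine Finset.sum_bij' (fun T _ => T.image σ) (fun T _ => T.image σ.symm) ?_ ?_ ?_ ?_ ?_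
  · intro T hT
    simp only [Finset.mem_powersetCard] at hT ⊢
    exact ⟨Finset.image_subset_image hT.1, by rw [Finset.card_image_of_injective _ σ.injective, hT.2]⟩
  · intro T hT
    simp only [Finset.mem_powersetCard] at hT ⊢
    constructor
    · intro x hx
      simp only [Finset.mem_image] at hx
      obtain ⟨y, hy, rfl⟩ := hx
      obtain ⟨z, hz, rfl⟩ := Finset.mem_image.mp (hT.1 hy)
      simpa using hz
    · rw [Finset.card_image_of_injective _ σ.symm.injective, hT.2]
  · intro T _
    ext x; simp
  · intro T _
    ext x; simp
  · intro T _
    rw [map_prod, Finset.prod_image (fun a _ b _ h => σ.injective h)]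
    simp

lemma rename_hOn (σ : Equiv.Perm (Fin n)) (s : Finset (Fin n)) (j : ℕ) :
    rename σ (hOn s j) = hOn (s.image σ) j := by
  rw [hOn, map_sum, hOn]
  refine Finset.sum_bij' (fun d _ => d.map σ) (fun d _ => d.map σ.symm) ?_ ?_ ?_ ?_ ?_
  · intro d hd
    simp only [Finset.mem_sym_iff] at hd ⊢
    intro a ha
    rw [Sym.mem_map] at ha
    obtain ⟨b, hb, rfl⟩ := ha
    exact Finset.mem_image_of_mem _ (hd b hb)
  · intro d hd
    simp only [Finset.mem_sym_iff] at hd ⊢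
    intro a ha
    rw [Sym.mem_map] at ha
    obtain ⟨b, hb, rfl⟩ := ha
    obtain ⟨z, hz, rfl⟩ := Finset.mem_image.mp (hd b hb)
    simpa using hz
  · intro d _
    simp [Sym.map_map]
  · intro d _
    simp [Sym.map_map]
  · intro d _
    rw [map_multiset_prod, Sym.coe_map, Multiset.map_map, Multiset.map_map]
    exact congrArg Multiset.prod (Multiset.map_congr rfl fun a _ => by simp)

lemma eOn_insert {A : Finset (Fin n)} {u : Fin n} (hu : u ∉ A) (k : ℕ) :
    eOn (insert u A) (k + 1) = X u * eOn A k + eOn A (k + 1) := by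
  rw [eOn, Finset.powersetCard_succ_insert hu, Finset.sum_union, Finset.sum_image, add_comm]
  · rw [eOn, eOn, Finset.mul_sum]
    congr 1
    refine Finset.sum_congr rfl fun T hT => ?_
    rw [Finset.prod_insert (fun h => hu ((Finset.mem_powersetCard.mp hT).1 h))]
  · intro T hT T' hT' h
    have h1 : u ∉ T := fun hx => hu ((Finset.mem_powersetCard.mp hT).1 hx)
    have h2 : u ∉ T' := fun hx => hu ((Finset.mem_powersetCard.mp hT').1 hx)
    rw [← Finset.erase_insert h1, ← Finset.erase_insert h2, h]
  · rw [Finset.disjoint_left]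
    intro T hT hT2
    obtain ⟨T', _, rfl⟩ := Finset.mem_image.mp hT2
    exact hu ((Finset.mem_powersetCard.mp hT).1 (Finset.mem_insert_self u T'))

lemma hOn_insert {A : Finset (Fin n)} {u : Fin n} (hu : u ∉ A) (j : ℕ) :
    hOn (insert u A) (j + 1) = X u * hOn (insert u A) j + hOn A (j + 1) := by
  classical
  rw [hOn]
  rw [← Finset.sum_filter_add_sum_filter_not ((insert u A).sym (j+1)) (fun d => u ∈ d)]
  congr 1
  · rw [hOn, Finset.mul_sum]
    refine Finset.sum_bij' (fun d hd => Sym.erase d u (by simpa using (Finset.mem_filter.mp hd).2))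
      (fun d _ => u ::ₛ d) ?_ ?_ ?_ ?_ ?_
    · intro d hd
      obtain ⟨hd1, hd2⟩ := Finset.mem_filter.mp hd
      rw [Finset.mem_sym_iff] at hd1 ⊢
      intro a ha
      exact hd1 a (Multiset.erase_subset u (↑d) ha)
    · intro d hd
      rw [Finset.mem_sym_iff] at hd
      rw [Finset.mem_filter, Finset.mem_sym_iff]
      refine ⟨fun a ha => ?_, Sym.mem_cons_self u d⟩
      rcases Sym.mem_cons.mp ha with rfl | h
      · exact Finset.mem_insert_self _ _
      · exact hd a h
    · intro d hd
      exact Sym.cons_erase _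
    · intro d hd
      exact Sym.erase_cons_head _ _
    · intro d hd
      conv_lhs => rw [← Sym.cons_erase (show u ∈ d by simpa using (Finset.mem_filter.mp hd).2)]
      rw [Sym.coe_cons, Multiset.map_cons, Multiset.prod_cons]
  · rw [hOn]
    apply Finset.sum_congr _ (fun _ _ => rfl)
    ext d
    simp only [Finset.mem_filter, Finset.mem_sym_iff, Finset.mem_insert]
    constructor
    · rintro ⟨h1, h2⟩ a ha
      rcases h1 a ha with rfl | h
      · exact absurd ha h2
      · exact h
    · intro h
      exact ⟨fun a ha => Or.inr (h a ha), fun hu' => hu (h u hu')⟩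

lemma eOn_diff {A : Finset (Fin n)} {u v : Fin n} (hu : u ∉ A) (hv : v ∉ A) (k : ℕ) :
    eOn (insert u A) (k + 1) - eOn (insert v A) (k + 1)
      = (X u - X v) * eOn A k := by
  rw [eOn_insert hu, eOn_insert hv]; ring

lemma hOn_diff {A : Finset (Fin n)} {u v : Fin n} (hu : u ∉ A) (hv : v ∉ A) (huv : u ≠ v)
    (j : ℕ) :
    hOn (insert u A) (j + 1) - hOn (insert v A) (j + 1)
      = (X u - X v) * hOn (insert u (insert v A)) j := by
  induction j with
  | zero =>
      rw [hOn_insert hu, hOn_insert hv, hOn_zero, hOn_zero, hOn_zero]; ring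
  | succ j ih =>
      have hu' : u ∉ insert v A := by simp [huv, hu]
      have this : X u * hOn (insert u A) (j+1) - X v * hOn (insert v A) (j+1)
          = X u * (hOn (insert u A) (j+1) - hOn (insert v A) (j+1))
            + (X u - X v) * hOn (insert v A) (j+1) := by ring
      rw [hOn_insert hu, hOn_insert hv, add_sub_add_comm, sub_self, add_zero, this, ih,
        hOn_insert hu' j]
      ring

lemma X_sub_X_ne {a b : Fin n} (h : a ≠ b) : (X a - X b : R n) ≠ 0 := by
  intro h0
  exact h (MvPolynomial.X_injective (sub_eq_zero.mp h0))

lemma D_spec {D : ℕ → R n → R n} (hD : IsDemFamily D) {i : ℕ} (h : i + 1 < n)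
    {P Q : R n}
    (hQ : (X (⟨i + 1, h⟩ : Fin n) - X ⟨i, by omega⟩) * Q
        = P - rename (Equiv.swap (⟨i, by omega⟩ : Fin n) ⟨i + 1, h⟩) P) :
    D i P = Q :=
  mul_left_cancel₀ (X_sub_X_ne (by simp [Fin.ext_iff])) ((hD i h P).trans hQ.symm)


lemma mem_image_swap (s : Finset (Fin n)) (a b x : Fin n) :
    x ∈ s.image (Equiv.swap a b) ↔ Equiv.swap a b x ∈ s := by
  rw [Finset.mem_image]
  constructor
  · rintro ⟨y, hy, rfl⟩
    simpa [Equiv.swap_apply_self] using hy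
  · intro h
    exact ⟨_, h, Equiv.swap_apply_self _ _ _⟩

lemma varsUpto_succ {i : ℕ} (hi : i < n) :
    varsUpto n (i + 1) = insert ⟨i, hi⟩ (varsUpto n i) := by
  ext x
  simp only [varsUpto, Finset.mem_filter, Finset.mem_univ, true_and, Finset.mem_insert,
    Fin.ext_iff]
  omega

lemma varsFrom_succ {i : ℕ} (hin : i + 1 < n) :
    varsFrom n (i + 1) = insert ⟨i + 1, hin⟩ (varsFrom n (i + 2)) := by
  ext x
  simp only [varsFrom, Finset.mem_filter, Finset.mem_univ, true_and, Finset.mem_insert,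
    Fin.ext_iff]
  omega

lemma notMem_varsUpto {i : ℕ} (hi : i < n) : (⟨i, hi⟩ : Fin n) ∉ varsUpto n i := by
  simp [varsUpto]

lemma notMem_varsUpto' {i : ℕ} (hin : i + 1 < n) :
    (⟨i + 1, hin⟩ : Fin n) ∉ varsUpto n i := by
  simp [varsUpto]

lemma notMem_varsFrom {i : ℕ} (hin : i + 1 < n) :
    (⟨i + 1, hin⟩ : Fin n) ∉ varsFrom n (i + 2) := by
  simp [varsFrom]

lemma notMem_varsFrom' {i : ℕ} (hin : i + 1 < n) :
    (⟨i, by omega⟩ : Fin n) ∉ varsFrom n (i + 2) := by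
  simp [varsFrom]

lemma swap_cases {i : ℕ} (hin : i + 1 < n) (x : Fin n) :
    (Equiv.swap (⟨i, by omega⟩ : Fin n) ⟨i + 1, hin⟩ x).val
      = if x.val = i then i + 1 else if x.val = i + 1 then i else x.val := by
  rcases eq_or_ne x ⟨i, by omega⟩ with rfl | hxa
  · rw [Equiv.swap_apply_left]; simp
  · rcases eq_or_ne x ⟨i + 1, hin⟩ with rfl | hxb
    · rw [Equiv.swap_apply_right]
      simp
    · rw [Equiv.swap_apply_of_ne_of_ne hxa hxb]
      simp only [Ne, Fin.ext_iff, Fin.val_mk] at hxa hxb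
      rw [if_neg hxa, if_neg hxb]

lemma image_swap_varsUpto {i : ℕ} (hin : i + 1 < n) :
    (varsUpto n (i + 1)).image (Equiv.swap (⟨i, by omega⟩ : Fin n) ⟨i + 1, hin⟩)
      = insert ⟨i + 1, hin⟩ (varsUpto n i) := by
  ext x
  rw [mem_image_swap]
  simp only [varsUpto, Finset.mem_filter, Finset.mem_univ, true_and, Finset.mem_insert,
    Fin.ext_iff, swap_cases hin x]
  split <;> [omega; (split <;> omega)]

lemma image_swap_varsFrom {i : ℕ} (hin : i + 1 < n) :
    (varsFrom n (i + 1)).image (Equiv.swap (⟨i, by omega⟩ : Fin n) ⟨i + 1, hin⟩)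
      = insert ⟨i, by omega⟩ (varsFrom n (i + 2)) := by
  ext x
  rw [mem_image_swap]
  simp only [varsFrom, Finset.mem_filter, Finset.mem_univ, true_and, Finset.mem_insert,
    Fin.ext_iff, swap_cases hin x]
  split <;> [omega; (split <;> omega)]


end Dem

open Dem in
/-- For `1 ≤ m ≤ n-1` (paper indexing; the Demazure operator
`∂_m` is `D (m-1)` in 0-based indexing):
(1) `∂_m(h_j(X_1,…,X_m)) = -h_{j-1}(X_1,…,X_{m+1})`;
(2) `∂_m(e_j(X_{m+1},…,X_n)) = e_{j-1}(X_{m+2},…,X_n)`,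
with the conventions `h_{-1} = e_{-1} = 0`. -/
theorem statement9 (n : ℕ) (D : ℕ → R n → R n) (hD : IsDemFamily D)
    (m : ℕ) (hm1 : 1 ≤ m) (hm2 : m < n) :
    (∀ j : ℕ, D (m - 1) (hOn (varsUpto n m) (j + 1))
        = -hOn (varsUpto n (m + 1)) j) ∧
    (D (m - 1) (hOn (varsUpto n m) 0) = 0) ∧
    (∀ j : ℕ, D (m - 1) (eOn (varsFrom n m) (j + 1))
        = eOn (varsFrom n (m + 1)) j) ∧
    (D (m - 1) (eOn (varsFrom n m) 0) = 0) := by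
  obtain ⟨i, rfl⟩ : ∃ i, m = i + 1 := ⟨m - 1, by omega⟩
  have hin : i + 1 < n := hm2
  have hi : i < n := by omega
  simp only [Nat.add_sub_cancel]
  set a : Fin n := ⟨i, hi⟩ with ha
  set b : Fin n := ⟨i + 1, hin⟩ with hb
  have hab : a ≠ b := by simp [ha, hb, Fin.ext_iff]
  refine ⟨fun j => ?_, ?_, fun j => ?_, ?_⟩
  · apply D_spec hD hin
    rw [rename_hOn, image_swap_varsUpto hin]
    rw [show varsUpto n (i + 1 + 1) = insert a (insert b (varsUpto n i)) by
      rw [varsUpto_succ hin, varsUpto_succ hi, Finset.insert_comm]]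
    rw [show varsUpto n (i + 1) = insert a (varsUpto n i) from varsUpto_succ hi]
    rw [hOn_diff (notMem_varsUpto hi) (notMem_varsUpto' hin) hab j]
    ring
  · apply D_spec hD hin
    rw [hOn_zero, map_one, sub_self, mul_zero]
  · apply D_spec hD hin
    rw [rename_eOn, image_swap_varsFrom hin, varsFrom_succ hin,
      eOn_diff (notMem_varsFrom hin) (notMem_varsFrom' hin) j]
  · apply D_spec hD hin
    rw [eOn_zero, map_one, sub_self, mul_zero]
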